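/- There exists a constant K' < ∞ (depending only on β and ε) such that for every sequence ε'_n of positive reals satisfying 2/α(ε) − 1 − (log ε'_n)/(n·β·β_c(ε)) > 0 for all n, for all sufficiently large n one has E[ ( 2^{εn}·c_n^{−1}·τ_n(x)·1{ c_n^{−1} τ_n(x) ≤ ε'_n } )² ] ≤ K' · 2^{εn} · (ε'_n)^{ 2 − α_n(ε) − (log ε'_n)/(2nβ²) } / ( 2/α(ε) − 1 − (log ε'_n)/(n β β_c(ε)) ), where α_n(ε) = (nβ²)^{−1} log c_n. -/

import Mathlib

set_option maxHeartbeats 1000000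

open MeasureTheory ProbabilityTheory Filter Real Set
open scoped NNReal ENNReal

noncomputable section


lemma gauss_key_eq {n u : ℝ} (hn : 0 < n) (hu : 0 < u) :
    ∫ x in Ioi u, (x/u) * Real.exp (-x^2/(2*n)) = n/u * Real.exp (-u^2/(2*n)) := by
  have hb : (0:ℝ) < 1/(2*n) := by positivity
  have hderiv : ∀ x ∈ Ici u, HasDerivAt (fun x => -(n/u) * Real.exp (-x^2/(2*n)))
      ((x/u) * Real.exp (-x^2/(2*n))) x := by
    intro x _
    have h1 : HasDerivAt (fun x : ℝ => -x^2/(2*n)) (-(2*x^1)/(2*n)) x := by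
      exact ((hasDerivAt_pow 2 x).neg).div_const (2*n)
    have h2 := (h1.exp).const_mul (-(n/u))
    refine HasDerivAt.congr_deriv h2 ?_
    rw [pow_one]
    field_simp
  have hint : IntegrableOn (fun x => (x/u) * Real.exp (-x^2/(2*n))) (Ioi u) := by
    have := (integrable_mul_exp_neg_mul_sq hb).const_mul (1/u)
    refine (this.congr (Eventually.of_forall fun x => ?_)).integrableOn
    rw [show -(x^2)/(2*n) = -(1/(2*n)) * x^2 by ring]
    ring
  have hlim : Tendsto (fun x => -(n/u) * Real.exp (-x^2/(2*n))) atTop (nhds 0) := by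
    rw [show (0:ℝ) = -(n/u) * 0 by ring]
    refine Tendsto.const_mul _ ?_
    refine Real.tendsto_exp_atBot.comp ?_
    have : Tendsto (fun x : ℝ => x^2/(2*n)) atTop atTop :=
      (tendsto_pow_atTop (two_ne_zero)).atTop_div_const (by positivity)
    have h2 : Tendsto (fun x : ℝ => -(x^2/(2*n))) atTop atBot :=
      tendsto_neg_atTop_atBot.comp this
    simpa [neg_div] using h2
  have := integral_Ioi_of_hasDerivAt_of_tendsto' hderiv hint hlim
  rw [this]
  ring

lemma integrableOn_gauss {n : ℝ} (hn : 0 < n) (s : Set ℝ) :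
    IntegrableOn (fun x => Real.exp (-x^2/(2*n))) s := by
  have hb : (0:ℝ) < 1/(2*n) := by positivity
  refine ((integrable_exp_neg_mul_sq hb).congr (Eventually.of_forall fun x => ?_)).integrableOn
  simp only []
  rw [show -(1/(2*n)) * x^2 = -x^2/(2*n) by ring]

lemma gauss_tail_ub {n u : ℝ} (hn : 0 < n) (hu : 0 < u) :
    ∫ x in Ioi u, Real.exp (-x^2/(2*n)) ≤ n/u * Real.exp (-u^2/(2*n)) := by
  rw [← gauss_key_eq hn hu]
  refine setIntegral_mono_on ((integrableOn_gauss hn _)) ?_ measurableSet_Ioi ?_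
  · have hb : (0:ℝ) < 1/(2*n) := by positivity
    have := (integrable_mul_exp_neg_mul_sq hb).const_mul (1/u)
    refine (this.congr (Eventually.of_forall fun x => ?_)).integrableOn
    rw [show -(x^2)/(2*n) = -(1/(2*n)) * x^2 by ring]
    ring
  · intro x hx
    have h1 : (1:ℝ) ≤ x/u := (one_le_div hu).2 (le_of_lt hx)
    nlinarith [Real.exp_pos (-x^2/(2*n))]

lemma gauss_lb_key_eq {n v : ℝ} (hn : 0 < n) (hv : 0 < v) :
    ∫ x in Ioi v, (1 - 3*n^2*(x^4)⁻¹) * Real.exp (-x^2/(2*n))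
      = (n/v - n^2*(v^3)⁻¹) * Real.exp (-v^2/(2*n)) := by
  have hb : (0:ℝ) < 1/(2*n) := by positivity
  have hderiv : ∀ x ∈ Ici v, HasDerivAt
      (fun x => -(n * x⁻¹ - n^2 * (x^3)⁻¹) * Real.exp (-x^2/(2*n)))
      ((1 - 3*n^2*(x^4)⁻¹) * Real.exp (-x^2/(2*n))) x := by
    intro x hx
    have hx0 : x ≠ 0 := ne_of_gt (lt_of_lt_of_le hv hx)
    have h1 : HasDerivAt (fun x : ℝ => -x^2/(2*n)) (-(2*x^1)/(2*n)) x :=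
      ((hasDerivAt_pow 2 x).neg).div_const (2*n)
    have hE := h1.exp
    have hinv : HasDerivAt (fun y : ℝ => y⁻¹) (-(x^2)⁻¹) x := by
      simpa using hasDerivAt_inv hx0
    have h3 : HasDerivAt (fun y : ℝ => (y^3)⁻¹) (-(3*x^2) / (x^3)^2) x := by
      have h3' := (hasDerivAt_pow 3 x).inv (pow_ne_zero 3 hx0)
      simp at h3'
      exact h3'
    have hG : HasDerivAt (fun y : ℝ => -(n * y⁻¹ - n^2 * (y^3)⁻¹))
        (-(n * (-(x^2)⁻¹) - n^2 * (-(3*x^2) / (x^3)^2))) x :=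
      ((hinv.const_mul n).sub (h3.const_mul (n^2))).neg
    have hmul := hG.mul hE
    have hkey : ∀ E : ℝ,
        -(n * (-(x^2)⁻¹) - n^2 * (-(3*x^2) / (x^3)^2)) * E
          + -(n * x⁻¹ - n^2 * (x^3)⁻¹) * (E * (-(2*x^1)/(2*n)))
        = (1 - 3*n^2*(x^4)⁻¹) * E := by
      intro E
      field_simp
      ring
    have := hkey (Real.exp (-x^2/(2*n)))
    rw [this] at hmul
    exact hmul
  have hint : IntegrableOn (fun x => (1 - 3*n^2*(x^4)⁻¹) * Real.exp (-x^2/(2*n))) (Ioi v) := by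
    refine Integrable.mono' (((integrableOn_gauss hn (Ioi v)).const_mul (1 + 3*n^2*(v^4)⁻¹)))
      (Measurable.aestronglyMeasurable (by fun_prop)) ?_
    filter_upwards [ae_restrict_mem measurableSet_Ioi] with x hx
    have hxv : v < x := hx
    have hx0 : 0 < x := lt_trans hv hxv
    have h4 : (x^4)⁻¹ ≤ (v^4)⁻¹ := by
      apply inv_anti₀ (by positivity)
      exact pow_le_pow_left₀ (le_of_lt hv) (le_of_lt hxv) 4
    have ht0 : (0:ℝ) ≤ 3*n^2*(x^4)⁻¹ := by positivity
    have ht1 : 3*n^2*(x^4)⁻¹ ≤ 3*n^2*(v^4)⁻¹ := by nlinarith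
    rw [Real.norm_eq_abs, abs_mul, abs_of_nonneg (Real.exp_pos _).le]
    have habs : |1 - 3*n^2*(x^4)⁻¹| ≤ 1 + 3*n^2*(v^4)⁻¹ := by
      rw [abs_le]; constructor <;> nlinarith
    nlinarith [Real.exp_pos (-x^2/(2*n))]
  have hlim : Tendsto (fun x => -(n * x⁻¹ - n^2 * (x^3)⁻¹) * Real.exp (-x^2/(2*n)))
      atTop (nhds 0) := by
    rw [show (0:ℝ) = -(n * 0 - n^2 * 0) * 0 by ring]
    refine Tendsto.mul (Tendsto.neg (Tendsto.sub ?_ ?_)) ?_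
    · exact (tendsto_inv_atTop_zero).const_mul n
    · exact ((tendsto_pow_atTop (three_ne_zero)).inv_tendsto_atTop).const_mul (n^2)
    · refine Real.tendsto_exp_atBot.comp ?_
      have h0 : Tendsto (fun x : ℝ => x^2/(2*n)) atTop atTop :=
        (tendsto_pow_atTop (two_ne_zero)).atTop_div_const (by positivity)
      have h2 : Tendsto (fun x : ℝ => -(x^2/(2*n))) atTop atBot :=
        tendsto_neg_atTop_atBot.comp h0
      simpa [neg_div] using h2
  rw [integral_Ioi_of_hasDerivAt_of_tendsto' hderiv hint hlim]
  have hv0 : v ≠ 0 := ne_of_gt hv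
  field_simp
  ring

lemma gauss_tail_lb {n v : ℝ} (hn : 0 < n) (hv : Real.sqrt (2*n) ≤ v) :
    n/v * (1/2) * Real.exp (-v^2/(2*n)) ≤ ∫ x in Ioi v, Real.exp (-x^2/(2*n)) := by
  have hv0 : 0 < v := lt_of_lt_of_le (Real.sqrt_pos.2 (by positivity)) hv
  have h2n : 2*n ≤ v^2 := by
    calc 2*n = Real.sqrt (2*n)^2 := (Real.sq_sqrt (by positivity)).symm
    _ ≤ v^2 := pow_le_pow_left₀ (Real.sqrt_nonneg _) hv 2
  have hmono : ∫ x in Ioi v, (1 - 3*n^2*(x^4)⁻¹) * Real.exp (-x^2/(2*n))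
      ≤ ∫ x in Ioi v, Real.exp (-x^2/(2*n)) := by
    refine setIntegral_mono_on ?_ (integrableOn_gauss hn _) measurableSet_Ioi ?_
    · refine Integrable.mono' (((integrableOn_gauss hn (Ioi v)).const_mul (1 + 3*n^2*(v^4)⁻¹)))
        (Measurable.aestronglyMeasurable (by fun_prop)) ?_
      filter_upwards [ae_restrict_mem measurableSet_Ioi] with x hx
      have hxv : v < x := hx
      have hx0 : 0 < x := lt_trans hv0 hxv
      have h4 : (x^4)⁻¹ ≤ (v^4)⁻¹ := by
        apply inv_anti₀ (by positivity)
        exact pow_le_pow_left₀ (le_of_lt hv0) (le_of_lt hxv) 4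
      have ht0 : (0:ℝ) ≤ 3*n^2*(x^4)⁻¹ := by positivity
      have ht1 : 3*n^2*(x^4)⁻¹ ≤ 3*n^2*(v^4)⁻¹ := by nlinarith
      rw [Real.norm_eq_abs, abs_mul, abs_of_nonneg (Real.exp_pos _).le]
      have habs : |1 - 3*n^2*(x^4)⁻¹| ≤ 1 + 3*n^2*(v^4)⁻¹ := by
        rw [abs_le]; constructor <;> nlinarith
      nlinarith [Real.exp_pos (-x^2/(2*n))]
    · intro x hx
      have hx0 : 0 < x := lt_trans hv0 hx
      have : (0:ℝ) ≤ 3*n^2*(x^4)⁻¹ := by positivity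
      nlinarith [Real.exp_pos (-x^2/(2*n))]
  refine le_trans ?_ (le_trans (le_of_eq (gauss_lb_key_eq hn hv0).symm) hmono)
  have hfrac : n/v^2 ≤ 1/2 := by
    rw [div_le_div_iff₀ (by positivity) two_pos]
    linarith
  have heq : n^2*(v^3)⁻¹ = (n/v) * (n/v^2) := by
    field_simp
  have hle : n^2*(v^3)⁻¹ ≤ (n/v) * (1/2) := by
    rw [heq]
    exact mul_le_mul_of_nonneg_left hfrac (by positivity)
  have : n/v * (1/2) ≤ n/v - n^2*(v^3)⁻¹ := by
    have : n/v - n/v * (1/2) = n/v * (1/2) := by ring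
    linarith
  exact mul_le_mul_of_nonneg_right this (Real.exp_pos _).le

lemma integral_Ioi_shift (f : ℝ → ℝ) (a d : ℝ) :
    ∫ x in Ioi a, f (x + d) = ∫ x in Ioi (a + d), f x := by
  have A : MeasurableEmbedding (fun x : ℝ => x + d) :=
    (Homeomorph.addRight d).isClosedEmbedding.measurableEmbedding
  have mp : MeasurePreserving (fun x : ℝ => x + d) volume volume :=
    measurePreserving_add_right volume d
  have h := mp.setIntegral_preimage_emb A f (Ioi (a + d))
  rw [← h]
  congr 1
  ext x
  simp

theorem truncated_second_moment_bound
    {Ω : Type*} [MeasurableSpace Ω] (P : Measure Ω) [IsProbabilityMeasure P]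
    (H : (n : ℕ) → (Fin n → Bool) → Ω → ℝ)
    (hmeas : ∀ n x, Measurable (H n x))
    (hgauss : ∀ n x, Measure.map (H n x) P = gaussianReal 0 n)
    (hindep : iIndepFun
      (fun p : (Σ n : ℕ, (Fin n → Bool)) => H p.1 p.2) P)
    (β : ℝ) (hβ : 0 < β)
    (ε : ℝ) (hε0 : 0 < ε) (hε1 : ε < 1)
    (c : ℕ → ℝ)
    (hc : ∀ n, 1 ≤ n → ∀ x : Fin n → Bool, 0 < c n ∧
      (2 : ℝ) ^ (ε * n) * (P {ω | c n ≤ Real.exp (-β * H n x ω)}).toReal = 1) :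
    ∃ K' : ℝ, ∀ εp : ℕ → ℝ, (∀ n, 0 < εp n) →
      (∀ n, 1 ≤ n → 0 < 2 * β / Real.sqrt (2 * ε * Real.log 2) - 1 -
          Real.log (εp n) / (n * β * Real.sqrt (2 * ε * Real.log 2))) →
      ∀ᶠ n : ℕ in atTop, ∀ x : Fin n → Bool,
        (∫ ω, (if (c n)⁻¹ * Real.exp (-β * H n x ω) ≤ εp n then
            ((2 : ℝ) ^ (ε * n) * ((c n)⁻¹ * Real.exp (-β * H n x ω))) ^ 2 else 0) ∂P)
          ≤ K' * (2 : ℝ) ^ (ε * n) *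
              (εp n) ^ (2 - Real.log (c n) / (n * β ^ 2) -
                Real.log (εp n) / (2 * n * β ^ 2)) /
              (2 * β / Real.sqrt (2 * ε * Real.log 2) - 1 -
                Real.log (εp n) / (n * β * Real.sqrt (2 * ε * Real.log 2))) := by
  classical
  set βc : ℝ := Real.sqrt (2 * ε * Real.log 2) with hβc_def
  have hlog2 : 0 < Real.log 2 := Real.log_pos one_lt_two
  have hβc : 0 < βc := Real.sqrt_pos.2 (by positivity)
  have hβc_sq : βc ^ 2 = 2 * ε * Real.log 2 := Real.sq_sqrt (by positivity)
  refine ⟨2, fun εp hεp hDpos => ?_⟩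
  have hev1 : ∀ᶠ n : ℕ in atTop, 1 ≤ n := eventually_ge_atTop 1
  have hev2 : ∀ᶠ n : ℕ in atTop, (2/βc)^2/(2*π) ≤ (n:ℝ) :=
    tendsto_natCast_atTop_atTop.eventually_ge_atTop _
  have hev3 : ∀ᶠ n : ℕ in atTop,
      (Real.log (4 * Real.sqrt π * Real.exp 1) + 1)/(ε * Real.log 2) ≤ (n:ℝ) :=
    tendsto_natCast_atTop_atTop.eventually_ge_atTop _
  filter_upwards [hev1, hev2, hev3] with n hn1 hn2 hn3
  intro x
  -- basic quantities
  have hnR : (0:ℝ) < (n:ℝ) := by exact_mod_cast Nat.lt_of_lt_of_le Nat.zero_lt_one hn1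
  have hnNN : (n : ℝ≥0) ≠ 0 := by
    simp only [ne_eq, Nat.cast_eq_zero]
    omega
  obtain ⟨hc0, hceq⟩ := hc n hn1 x
  set A : ℝ := (2:ℝ) ^ (ε * (n:ℝ)) with hA_def
  have hA : 0 < A := Real.rpow_pos_of_pos two_pos _
  have hA_eq : A = Real.exp (Real.log 2 * (ε * n)) := Real.rpow_def_of_pos two_pos _
  set L : ℝ := Real.log (c n) with hL_def
  set l : ℝ := Real.log (εp n) with hl_def
  set sp : ℝ := Real.sqrt (2 * π * n) with hsp_def
  have hsp : 0 < sp := Real.sqrt_pos.2 (by positivity)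
  set v : ℝ := L / β with hv_def
  set D : ℝ := 2 * β / βc - 1 - l / (n * β * βc) with hD_def
  have hD : 0 < D := hDpos n hn1
  -- E2 : 2 ≤ sp * βc
  have hE2 : 2 ≤ sp * βc := by
    have h1 : (2/βc)^2 ≤ 2 * π * n := by
      have := hn2
      rw [div_le_iff₀ (by positivity)] at this
      nlinarith [this]
    have h2 : 2/βc ≤ sp := by
      rw [hsp_def]
      rw [show (2/βc) = Real.sqrt ((2/βc)^2) by rw [Real.sqrt_sq (by positivity)]]
      exact Real.sqrt_le_sqrt h1
    calc 2 = (2/βc) * βc := by field_simp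
    _ ≤ sp * βc := mul_le_mul_of_nonneg_right h2 hβc.le
  -- E3 : 4√π e < A
  have hE3 : 4 * Real.sqrt π * Real.exp 1 < A := by
    have hM : (0:ℝ) < 4 * Real.sqrt π * Real.exp 1 := by
      positivity
    have h1 : Real.log (4 * Real.sqrt π * Real.exp 1) + 1 ≤ (n:ℝ) * (ε * Real.log 2) := by
      have := hn3
      rw [div_le_iff₀ (by positivity)] at this
      linarith [this]
    calc 4 * Real.sqrt π * Real.exp 1
        = Real.exp (Real.log (4 * Real.sqrt π * Real.exp 1)) := (Real.exp_log hM).symm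
      _ < Real.exp (Real.log 2 * (ε * n)) := by
          apply Real.exp_lt_exp.2
          nlinarith [h1]
      _ = A := hA_eq.symm
  -- tail identity
  have hsetEq : {ω | c n ≤ Real.exp (-β * H n x ω)} = (H n x) ⁻¹' (Iic (-(L/β))) := by
    ext ω
    simp only [Set.mem_setOf_eq, Set.mem_preimage, Set.mem_Iic]
    rw [show -(L/β) = (-L)/β by ring, le_div_iff₀ hβ, ← Real.log_le_iff_le_exp hc0]
    constructor <;> intro h <;> linarith
  have hpdf : ∀ y : ℝ, gaussianPDFReal 0 (n:ℝ≥0) y = sp⁻¹ * Real.exp (-y^2/(2*(n:ℝ))) := by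
    intro y
    simp only [gaussianPDFReal, NNReal.coe_natCast, sub_zero, hsp_def]
  have hPval : (P {ω | c n ≤ Real.exp (-β * H n x ω)}).toReal
      = sp⁻¹ * ∫ y in Ioi v, Real.exp (-y^2/(2*(n:ℝ))) := by
    rw [hsetEq, ← Measure.map_apply (hmeas n x) measurableSet_Iic, hgauss n x,
      gaussianReal_apply_eq_integral 0 hnNN _,
      ENNReal.toReal_ofReal (integral_nonneg fun y => gaussianPDFReal_nonneg _ _ _)]
    simp_rw [hpdf]
    rw [integral_const_mul]
    congr 1
    have hI := integral_comp_neg_Iic (-v) (fun y => Real.exp (-y^2/(2*(n:ℝ))))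
    simp only [neg_neg] at hI
    rw [← hI]
    congr 1
    funext y
    rw [neg_sq]
  have hq : sp⁻¹ * ∫ y in Ioi v, Real.exp (-y^2/(2*(n:ℝ))) = A⁻¹ := by
    apply eq_inv_of_mul_eq_one_left
    rw [mul_comm, ← hPval]
    exact hceq
  -- Claim A : L ≤ n β βc
  have claimA : L ≤ (n:ℝ) * β * βc := by
    by_contra hcon
    push_neg at hcon
    have hvgt : (n:ℝ) * βc < v := by
      rw [hv_def, lt_div_iff₀ hβ]
      nlinarith
    have hnβc : 0 < (n:ℝ) * βc := by positivity
    have hmono : (∫ y in Ioi v, Real.exp (-y^2/(2*(n:ℝ))))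
        ≤ ∫ y in Ioi ((n:ℝ)*βc), Real.exp (-y^2/(2*(n:ℝ))) := by
      refine setIntegral_mono_set (integrableOn_gauss hnR _) ?_ ?_
      · exact Eventually.of_forall fun y => (Real.exp_pos _).le
      · exact (Ioi_subset_Ioi hvgt.le).eventuallyLE
    have hub := gauss_tail_ub hnR hnβc
    have hexp : Real.exp (-((n:ℝ)*βc)^2/(2*(n:ℝ))) = A⁻¹ := by
      rw [hA_eq, ← Real.exp_neg]
      congr 1
      rw [show ((n:ℝ)*βc)^2 = (n:ℝ)^2 * βc^2 by ring, hβc_sq]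
      field_simp
    rw [hexp] at hub
    have hfinal : A⁻¹ ≤ sp⁻¹ * ((n:ℝ)/((n:ℝ)*βc) * A⁻¹) := by
      conv_lhs => rw [← hq]
      exact mul_le_mul_of_nonneg_left (hmono.trans hub) (inv_nonneg.2 hsp.le)
    have hhalf : sp⁻¹ * ((n:ℝ)/((n:ℝ)*βc)) ≤ 1/2 := by
      rw [show (n:ℝ)/((n:ℝ)*βc) = βc⁻¹ by field_simp]
      rw [show sp⁻¹ * βc⁻¹ = (sp*βc)⁻¹ by rw [mul_inv]]
      rw [show (1:ℝ)/2 = (2:ℝ)⁻¹ by norm_num]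
      exact inv_anti₀ (by norm_num : (0:ℝ) < 2) hE2
    have hApos : 0 < A⁻¹ := inv_pos.2 hA
    nlinarith [hfinal, hhalf, hApos, hsp, inv_pos.2 hsp]
  -- Claim B : β * sqrt(2n) ≤ L
  have claimB : Real.sqrt (2*(n:ℝ)) ≤ v := by
    by_contra hcon
    push_neg at hcon
    have hs2n : 0 < Real.sqrt (2*(n:ℝ)) := Real.sqrt_pos.2 (by positivity)
    have hmono : (∫ y in Ioi (Real.sqrt (2*(n:ℝ))), Real.exp (-y^2/(2*(n:ℝ))))
        ≤ ∫ y in Ioi v, Real.exp (-y^2/(2*(n:ℝ))) := by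
      refine setIntegral_mono_set (integrableOn_gauss hnR _) ?_ ?_
      · exact Eventually.of_forall fun y => (Real.exp_pos _).le
      · exact (Ioi_subset_Ioi hcon.le).eventuallyLE
    have hlb := gauss_tail_lb hnR (le_refl (Real.sqrt (2*(n:ℝ))))
    have hsq : Real.sqrt (2*(n:ℝ))^2 = 2*(n:ℝ) := Real.sq_sqrt (by positivity)
    rw [hsq] at hlb
    have hone : Real.exp (-(2*(n:ℝ))/(2*(n:ℝ))) = Real.exp (-1) := by
      congr 1
      field_simp
    rw [hone] at hlb
    have hss : sp * Real.sqrt (2*(n:ℝ)) = 2*(n:ℝ)*Real.sqrt π := by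
      rw [hsp_def, ← Real.sqrt_mul (by positivity)]
      rw [show 2*π*(n:ℝ)*(2*(n:ℝ)) = (2*(n:ℝ))^2 * π by ring]
      rw [Real.sqrt_mul (sq_nonneg _), Real.sqrt_sq (by positivity)]
    have hkap : Real.exp (-1)/(4*Real.sqrt π) ≤ A⁻¹ := by
      conv_rhs => rw [← hq]
      have h1 : sp⁻¹ * ((n:ℝ)/(Real.sqrt (2*(n:ℝ))) * (1/2) * Real.exp (-1))
          ≤ sp⁻¹ * ∫ y in Ioi v, Real.exp (-y^2/(2*(n:ℝ))) :=
        mul_le_mul_of_nonneg_left (hlb.trans hmono) (inv_nonneg.2 hsp.le)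
      refine le_trans (le_of_eq ?_) h1
      have hπ : 0 < Real.sqrt π := Real.sqrt_pos.2 Real.pi_pos
      rw [eq_comm]
      rw [show sp⁻¹ * ((n:ℝ)/(Real.sqrt (2*(n:ℝ))) * (1/2) * Real.exp (-1))
          = (n:ℝ) * Real.exp (-1) / (2 * (sp * Real.sqrt (2*(n:ℝ)))) by
        field_simp]
      rw [hss]
      rw [div_eq_div_iff (by positivity) (by positivity)]
      ring
    have hAlt : A⁻¹ < Real.exp (-1)/(4*Real.sqrt π) := by
      rw [Real.exp_neg, div_eq_mul_inv, ← mul_inv]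
      exact inv_strictAnti₀ (by positivity) (by nlinarith [hE3])
    linarith
  -- main computation
  set a : ℝ := -(L + l)/β with ha_def
  set u : ℝ := a + 2*β*(n:ℝ) with hu_def
  have hu_id : β * u = ((n:ℝ)*β*βc - L) + (n:ℝ)*β*βc*D := by
    rw [hu_def, ha_def, hD_def]
    field_simp
    ring
  have hnββcD : 0 < (n:ℝ)*β*βc*D := by positivity
  have hu_pos : 0 < u := by nlinarith [hu_id, claimA, hnββcD, hβ]
  have hcond : ∀ y : ℝ, ((c n)⁻¹ * Real.exp (-β * y) ≤ εp n) ↔ a ≤ y := by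
    intro y
    rw [inv_mul_le_iff₀ hc0,
      show c n * εp n = Real.exp (L + l) by
        rw [Real.exp_add, hL_def, hl_def, Real.exp_log hc0, Real.exp_log (hεp n)],
      Real.exp_le_exp, ha_def, div_le_iff₀ hβ]
    constructor <;> intro h <;> nlinarith
  have hmg : Measurable (fun y : ℝ => if (c n)⁻¹ * Real.exp (-β * y) ≤ εp n then
      (A * ((c n)⁻¹ * Real.exp (-β * y)))^2 else 0) := by
    refine Measurable.ite ?_ (by fun_prop) measurable_const
    exact measurableSet_le (by fun_prop) measurable_const
  have step1 : (∫ ω, (if (c n)⁻¹ * Real.exp (-β * H n x ω) ≤ εp n then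
        (A * ((c n)⁻¹ * Real.exp (-β * H n x ω)))^2 else 0) ∂P)
      = ∫ y, (if (c n)⁻¹ * Real.exp (-β * y) ≤ εp n then
        (A * ((c n)⁻¹ * Real.exp (-β * y)))^2 else 0) ∂(gaussianReal 0 (n:ℝ≥0)) := by
    rw [← hgauss n x, integral_map (hmeas n x).aemeasurable hmg.aestronglyMeasurable]
  have hifind : (fun y : ℝ => if (c n)⁻¹ * Real.exp (-β * y) ≤ εp n then
        (A * ((c n)⁻¹ * Real.exp (-β * y)))^2 else 0)
      = Set.indicator (Ici a) (fun y => (A * ((c n)⁻¹ * Real.exp (-β * y)))^2) := by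
    funext y
    rw [Set.indicator_apply]
    simp only [mem_Ici]
    exact if_congr (hcond y) rfl rfl
  have step2 : (∫ y, (if (c n)⁻¹ * Real.exp (-β * y) ≤ εp n then
        (A * ((c n)⁻¹ * Real.exp (-β * y)))^2 else 0) ∂(gaussianReal 0 (n:ℝ≥0)))
      = ∫ y, gaussianPDFReal 0 (n:ℝ≥0) y *
          Set.indicator (Ici a) (fun y => (A * ((c n)⁻¹ * Real.exp (-β * y)))^2) y := by
    rw [hifind, gaussianReal_of_var_ne_zero 0 hnNN,
      show gaussianPDF 0 (n:ℝ≥0) = fun y => ((gaussianPDFReal 0 (n:ℝ≥0) y).toNNReal : ℝ≥0∞)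
        from rfl,
      integral_withDensity_eq_integral_smul (measurable_gaussianPDFReal 0 _).real_toNNReal _]
    congr 1
    funext y
    rw [NNReal.smul_def, Real.coe_toNNReal _ (gaussianPDFReal_nonneg _ _ _), smul_eq_mul]
  have step3 : (∫ y, gaussianPDFReal 0 (n:ℝ≥0) y *
        Set.indicator (Ici a) (fun y => (A * ((c n)⁻¹ * Real.exp (-β * y)))^2) y)
      = ∫ y in Ioi a, gaussianPDFReal 0 (n:ℝ≥0) y * (A * ((c n)⁻¹ * Real.exp (-β * y)))^2 := by
    rw [← integral_Ici_eq_integral_Ioi, ← integral_indicator measurableSet_Ici]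
    congr 1
    funext y
    exact (Set.indicator_mul_right _ _ _).symm
  have hptwise : ∀ y : ℝ, gaussianPDFReal 0 (n:ℝ≥0) y * (A * ((c n)⁻¹ * Real.exp (-β * y)))^2
      = (sp⁻¹ * (A^2 * (((c n)⁻¹)^2 * Real.exp (2*β^2*(n:ℝ)))))
        * Real.exp (-(y + 2*β*(n:ℝ))^2/(2*(n:ℝ))) := by
    intro y
    rw [hpdf y]
    have hexp2 : Real.exp (-β*y)^2 = Real.exp (-(2*β*y)) := by
      rw [← Real.exp_nat_mul]
      congr 1
      push_cast
      ring
    have hcomb : Real.exp (-y^2/(2*(n:ℝ))) * Real.exp (-(2*β*y))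
        = Real.exp (2*β^2*(n:ℝ)) * Real.exp (-(y + 2*β*(n:ℝ))^2/(2*(n:ℝ))) := by
      rw [← Real.exp_add, ← Real.exp_add]
      congr 1
      field_simp
      ring
    have harr : sp⁻¹ * Real.exp (-y^2/(2*(n:ℝ))) * (A * ((c n)⁻¹ * Real.exp (-β*y)))^2
        = (sp⁻¹ * (A^2 * ((c n)⁻¹)^2))
          * (Real.exp (-y^2/(2*(n:ℝ))) * Real.exp (-(2*β*y))) := by
      rw [mul_pow, mul_pow, hexp2]
      ring
    rw [harr, hcomb]
    ring
  have step4 : (∫ y in Ioi a, gaussianPDFReal 0 (n:ℝ≥0) y * (A * ((c n)⁻¹ * Real.exp (-β * y)))^2)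
      = (sp⁻¹ * (A^2 * (((c n)⁻¹)^2 * Real.exp (2*β^2*(n:ℝ)))))
        * ∫ y in Ioi a, Real.exp (-(y + 2*β*(n:ℝ))^2/(2*(n:ℝ))) := by
    simp_rw [hptwise]
    rw [integral_const_mul]
  have step5 : (∫ y in Ioi a, Real.exp (-(y + 2*β*(n:ℝ))^2/(2*(n:ℝ))))
      = ∫ y in Ioi u, Real.exp (-y^2/(2*(n:ℝ))) := by
    have h := integral_Ioi_shift (fun y => Real.exp (-y^2/(2*(n:ℝ)))) a (2*β*(n:ℝ))
    simpa using h
  have htail_ub := gauss_tail_ub hnR hu_pos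
  have hC0 : (0:ℝ) ≤ sp⁻¹ * (A^2 * (((c n)⁻¹)^2 * Real.exp (2*β^2*(n:ℝ)))) := by positivity
  -- rewrite goal
  rw [step1, step2, step3, step4, step5]
  -- exponential bookkeeping
  have hEwt : (εp n) ^ (2 - L/((n:ℝ)*β^2) - l/(2*(n:ℝ)*β^2))
      = Real.exp (l * (2 - L/((n:ℝ)*β^2) - l/(2*(n:ℝ)*β^2))) := by
    rw [Real.rpow_def_of_pos (hεp n), hl_def]
  have hcinv : ((c n)⁻¹)^2 = Real.exp (-(2*L)) := by
    rw [show c n = Real.exp L from (Real.exp_log hc0).symm, ← Real.exp_neg, ← Real.exp_nat_mul]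
    congr 1
    push_cast
    ring
  have hprod : Real.exp (-(2*L)) * Real.exp (2*β^2*(n:ℝ)) * Real.exp (-u^2/(2*(n:ℝ)))
      = Real.exp (l * (2 - L/((n:ℝ)*β^2) - l/(2*(n:ℝ)*β^2))) * Real.exp (-(v^2)/(2*(n:ℝ))) := by
    rw [← Real.exp_add, ← Real.exp_add, ← Real.exp_add]
    congr 1
    rw [hu_def, ha_def, hv_def]
    field_simp
    ring
  have hvpos : 0 < v := lt_of_lt_of_le (Real.sqrt_pos.2 (by positivity)) claimB
  have htail_lb : sp⁻¹ * ((n:ℝ)/v * (1/2) * Real.exp (-v^2/(2*(n:ℝ)))) ≤ A⁻¹ := by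
    conv_rhs => rw [← hq]
    exact mul_le_mul_of_nonneg_left (gauss_tail_lb hnR claimB) (inv_nonneg.2 hsp.le)
  have hR : Real.exp (-v^2/(2*(n:ℝ))) ≤ 2 * v * sp * A⁻¹ / (n:ℝ) := by
    have h2 := mul_le_mul_of_nonneg_left htail_lb
      (by positivity : (0:ℝ) ≤ 2*v*sp/(n:ℝ))
    calc Real.exp (-v^2/(2*(n:ℝ)))
        = (2*v*sp/(n:ℝ)) * (sp⁻¹ * ((n:ℝ)/v * (1/2) * Real.exp (-v^2/(2*(n:ℝ))))) := by
          field_simp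
      _ ≤ (2*v*sp/(n:ℝ)) * A⁻¹ := h2
      _ = 2 * v * sp * A⁻¹ / (n:ℝ) := by ring
  have hvD : v * D ≤ u := by
    have h1 : L * D ≤ (n:ℝ)*β*βc*D := mul_le_mul_of_nonneg_right claimA hD.le
    have h2 : (n:ℝ)*β*βc*D ≤ β*u := by linarith [hu_id, h1, mul_le_mul_of_nonneg_right claimA hD.le]
    have h3 : β*(v*D) = L*D := by
      rw [hv_def]
      field_simp
    have h4 : β*(v*D) ≤ β*u := by linarith
    exact le_of_mul_le_mul_left h4 hβ
  have hvu : v/u ≤ 1/D := by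
    rw [div_le_div_iff₀ hu_pos hD]
    linarith [hvD]
  -- final chain
  calc (sp⁻¹ * (A^2 * (((c n)⁻¹)^2 * Real.exp (2*β^2*(n:ℝ)))))
        * ∫ y in Ioi u, Real.exp (-y^2/(2*(n:ℝ)))
      ≤ (sp⁻¹ * (A^2 * (((c n)⁻¹)^2 * Real.exp (2*β^2*(n:ℝ)))))
        * ((n:ℝ)/u * Real.exp (-u^2/(2*(n:ℝ)))) := by
        exact mul_le_mul_of_nonneg_left htail_ub hC0
    _ = sp⁻¹ * A^2 * ((n:ℝ)/u)
        * (Real.exp (l * (2 - L/((n:ℝ)*β^2) - l/(2*(n:ℝ)*β^2))) * Real.exp (-(v^2)/(2*(n:ℝ)))) := by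
        rw [hcinv]
        rw [show sp⁻¹ * (A^2 * (Real.exp (-(2*L)) * Real.exp (2*β^2*(n:ℝ))))
            * ((n:ℝ)/u * Real.exp (-u^2/(2*(n:ℝ))))
          = sp⁻¹ * A^2 * ((n:ℝ)/u)
            * (Real.exp (-(2*L)) * Real.exp (2*β^2*(n:ℝ)) * Real.exp (-u^2/(2*(n:ℝ)))) from by
            ring]
        rw [hprod]
    _ ≤ sp⁻¹ * A^2 * ((n:ℝ)/u)
        * (Real.exp (l * (2 - L/((n:ℝ)*β^2) - l/(2*(n:ℝ)*β^2))) * (2 * v * sp * A⁻¹ / (n:ℝ))) := by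
        have hexc : Real.exp (-(v^2)/(2*(n:ℝ))) = Real.exp (-v^2/(2*(n:ℝ))) := by norm_num
        rw [hexc]
        have hcoef : (0:ℝ) ≤ sp⁻¹ * A^2 * ((n:ℝ)/u)
            * Real.exp (l * (2 - L/((n:ℝ)*β^2) - l/(2*(n:ℝ)*β^2))) := by positivity
        calc sp⁻¹ * A^2 * ((n:ℝ)/u)
              * (Real.exp (l * (2 - L/((n:ℝ)*β^2) - l/(2*(n:ℝ)*β^2))) * Real.exp (-v^2/(2*(n:ℝ))))
            = (sp⁻¹ * A^2 * ((n:ℝ)/u)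
              * Real.exp (l * (2 - L/((n:ℝ)*β^2) - l/(2*(n:ℝ)*β^2)))) * Real.exp (-v^2/(2*(n:ℝ))) := by
              ring
          _ ≤ (sp⁻¹ * A^2 * ((n:ℝ)/u)
              * Real.exp (l * (2 - L/((n:ℝ)*β^2) - l/(2*(n:ℝ)*β^2)))) * (2 * v * sp * A⁻¹ / (n:ℝ)) :=
              mul_le_mul_of_nonneg_left hR hcoef
          _ = sp⁻¹ * A^2 * ((n:ℝ)/u)
              * (Real.exp (l * (2 - L/((n:ℝ)*β^2) - l/(2*(n:ℝ)*β^2))) * (2 * v * sp * A⁻¹ / (n:ℝ))) := by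
              ring
    _ = 2 * A * Real.exp (l * (2 - L/((n:ℝ)*β^2) - l/(2*(n:ℝ)*β^2))) * (v/u) := by
        field_simp
    _ ≤ 2 * A * Real.exp (l * (2 - L/((n:ℝ)*β^2) - l/(2*(n:ℝ)*β^2))) * (1/D) := by
        refine mul_le_mul_of_nonneg_left hvu (by positivity)
    _ = 2 * A * (εp n) ^ (2 - L/((n:ℝ)*β^2) - l/(2*(n:ℝ)*β^2)) / D := by
        rw [hEwt]
        ring
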